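/- arXiv:2501.09850 — 2 statements merged into one kernel-verified Lean document; each statement's English description precedes it below -/
import Mathlib

section
/- Let p be a prime, let r ≥ 1, and let k be a field of characteristic p. Let N be the r×r lower shift matrix over k, i.e. N(i,j) = 1 if i = j+1 and N(i,j) = 0 otherwise. Then there exists a strictly lower triangular r×r matrix A over k (meaning A(i,j) = 0 whenever i ≤ j) with A^p - A = N. (This is the matrix construction in the proof that the stack ℋ^o of very good regular log-connections is non-empty for GL_r: it produces a local log-connection with nilpotent residue whose p-curvature is the regular nilpotent element N.) -/
open Matrix Polynomial

/-- Powers of a strictly lower triangular matrix vanish above the `t`-th subdiagonal. -/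
theorem strictlyLower_pow_apply_eq_zero {r : ℕ} {k : Type*} [Field k]
    (M : Matrix (Fin r) (Fin r) k)
    (hM : ∀ i j : Fin r, (i : ℕ) ≤ (j : ℕ) → M i j = 0) :
    ∀ t (i j : Fin r), (i : ℕ) < (j : ℕ) + t → (M ^ t) i j = 0 := by
  intro t
  induction t with
  | zero =>
    intro i j h
    simp only [Nat.add_zero] at h
    rw [pow_zero]
    exact Matrix.one_apply_ne (by intro e; subst e; exact lt_irrefl _ h)
  | succ t ih =>
    intro i j h
    rw [pow_succ, Matrix.mul_apply]
    refine Finset.sum_eq_zero fun l _ => ?_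
    by_cases hl : (l : ℕ) ≤ (j : ℕ)
    · rw [hM l j hl, mul_zero]
    · push_neg at hl
      rw [ih i l (by omega), zero_mul]

/-- Over a field of characteristic `p`, the lower shift (regular nilpotent) matrix `N`
is in the image of the Artin–Schreier map `A ↦ A^p - A` restricted to strictly lower
triangular matrices. -/
theorem exists_strictly_lower_triangular_artinSchreier_eq_lowerShift
    (p : ℕ) (hp : p.Prime) (r : ℕ) (hr : 1 ≤ r)
    (k : Type*) [Field k] [CharP k p] :
    ∃ A : Matrix (Fin r) (Fin r) k,
      (∀ i j : Fin r, (i : ℕ) ≤ (j : ℕ) → A i j = 0) ∧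
      A ^ p - A =
        Matrix.of (fun i j : Fin r => if (i : ℕ) = (j : ℕ) + 1 then (1 : k) else 0) := by
  haveI : Fact p.Prime := ⟨hp⟩
  set N : Matrix (Fin r) (Fin r) k :=
    Matrix.of (fun i j : Fin r => if (i : ℕ) = (j : ℕ) + 1 then (1 : k) else 0) with hN
  have hNlow : ∀ i j : Fin r, (i : ℕ) ≤ (j : ℕ) → N i j = 0 := by
    intro i j hij
    simp only [hN, Matrix.of_apply]
    rw [if_neg]; omega
  have hpow := strictlyLower_pow_apply_eq_zero N hNlow
  -- S = ∑_{m=0}^{r} X^{p^m}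
  set S : Polynomial k := ∑ m ∈ Finset.range (r + 1), X ^ (p ^ m) with hS
  refine ⟨aeval N (-S), ?_, ?_⟩
  · intro i j hij
    have : aeval N (-S) = -(∑ m ∈ Finset.range (r + 1), N ^ (p ^ m)) := by
      simp [hS, map_sum]
    rw [this]
    simp only [Matrix.neg_apply, Matrix.sum_apply]
    rw [Finset.sum_eq_zero, neg_zero]
    intro m _
    exact hpow (p ^ m) i j (by have := Nat.one_le_two_pow (n := m); nlinarith [pow_pos hp.pos m, Nat.one_le_iff_ne_zero.mpr (pow_ne_zero m hp.pos.ne')])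
  · have hSp : (-S) ^ p = -(S ^ p) := by
      rw [neg_pow, neg_one_pow_char, neg_one_mul]
    have hSpow : S ^ p = ∑ m ∈ Finset.range (r + 1), X ^ (p ^ (m + 1)) := by
      rw [hS, sum_pow_char]
      congr 1; ext m
      rw [← pow_mul, pow_succ]
    have htel : S - S ^ p = X - X ^ (p ^ (r + 1)) := by
      rw [hSpow, hS, ← Finset.sum_sub_distrib, Finset.sum_range_sub' (fun m => X ^ (p ^ m))]
      simp
    have hNnil : N ^ (p ^ (r + 1)) = 0 := by
      ext i j
      rw [Matrix.zero_apply]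
      refine hpow _ i j ?_
      have h1 : r < p ^ (r + 1) := by have : r + 1 < p ^ (r + 1) := Nat.lt_pow_self hp.one_lt; omega
      have : (i : ℕ) < r := i.isLt
      omega
    calc aeval N (-S) ^ p - aeval N (-S)
        = aeval N ((-S) ^ p - (-S)) := by rw [map_sub, map_pow]
      _ = aeval N (S - S ^ p) := by rw [hSp]; ring_nf
      _ = N - N ^ (p ^ (r + 1)) := by rw [htel]; simp [map_sub, map_pow]
      _ = N := by rw [hNnil, sub_zero]
end

section
/- Let p be a prime, let k be an algebraically closed field of characteristic p, and let r ≥ 1. The set of multisets b over k satisfying Multiset.map (x ↦ x^p - x) b = (the multiset consisting of r copies of 0) has exactly binomial(p + r - 1, r) elements; moreover, for r ≥ 2 this number is strictly smaller than p^r. (This computes the set-theoretic fiber of the Artin–Schreier morphism AS_𝔠 over the point {0, 0, ..., 0} of 𝔠 = 𝔤𝔩_r // GL_r and shows, by comparison with the general fiber of cardinality p^r, that AS_𝔠 is not étale for GL_{r≥2}.) -/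
open Polynomial

theorem aux_choose_lt (q r : ℕ) (hq : 1 ≤ q) (hr : 2 ≤ r) :
    (q + r).choose r < (q + 1) ^ r := by
  induction r, hr using Nat.le_induction with
  | base =>
    rw [Nat.choose_two_right]
    have : (q + 2) * (q + 2 - 1) / 2 < (q + 1) ^ 2 := by
      rw [Nat.div_lt_iff_lt_mul (by norm_num)]
      have h : q + 2 - 1 = q + 1 := by omega
      rw [h]; nlinarith
    simpa using this
  | succ r hr ih =>
    have pascal : (q + (r + 1)).choose (r + 1)
        = (q + r).choose r + (q + r).choose (r + 1) := by
      have : q + (r + 1) = (q + r) + 1 := by ring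
      rw [this, Nat.choose_succ_succ]
    have h1 : (q + r).choose (r + 1) * (r + 1) = (q + r).choose r * q := by
      have := Nat.choose_succ_right_eq (q + r) r
      simpa using this
    have h2 : (q + r).choose (r + 1) ≤ (q + r).choose r * q := by
      calc (q + r).choose (r + 1) ≤ (q + r).choose (r + 1) * (r + 1) :=
            Nat.le_mul_of_pos_right _ (by omega)
        _ = (q + r).choose r * q := h1
    calc (q + (r + 1)).choose (r + 1) = (q + r).choose r + (q + r).choose (r + 1) := pascal
      _ ≤ (q + r).choose r + (q + r).choose r * q := by omega
      _ = (q + r).choose r * (q + 1) := by ring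
      _ < (q + 1) ^ r * (q + 1) := by
          exact Nat.mul_lt_mul_of_lt_of_le ih le_rfl (by omega)
      _ = (q + 1) ^ (r + 1) := by ring

/-- The fiber of the (multiset) Artin–Schreier morphism over `{0, 0, ..., 0}`
(`r` copies of `0`) has exactly `(p + r - 1).choose r` elements, which for `r ≥ 2` is
strictly smaller than `p^r`. -/
theorem artinSchreier_multiset_nilpotent_fiber_card
    (p : ℕ) (hp : p.Prime) (k : Type*) [Field k] [IsAlgClosed k] [CharP k p]
    (r : ℕ) (hr : 1 ≤ r) :
    {b : Multiset k |
        Multiset.map (fun x => x ^ p - x) b = Multiset.replicate r (0 : k)}.ncard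
      = (p + r - 1).choose r ∧
    (2 ≤ r → (p + r - 1).choose r < p ^ r) := by
  classical
  have hp1 : 1 < p := hp.one_lt
  set f : k[X] := X ^ p - X with hf
  have hfne : f ≠ 0 := FiniteField.X_pow_card_sub_X_ne_zero k hp1
  have hsep : f.Separable := galois_poly_separable p p (dvd_refl p)
  have hcard : Fintype.card (f.rootSet k) = p := by
    rw [Polynomial.card_rootSet_eq_natDegree hsep (IsAlgClosed.splits _)]
    exact FiniteField.X_pow_card_sub_X_natDegree_eq k hp1
  set S := f.rootSet k
  have hmemS : ∀ x : k, x ∈ S ↔ x ^ p - x = 0 := by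
    intro x
    rw [Polynomial.mem_rootSet' ]
    simp [hf, Polynomial.map_ne_zero_iff, hfne, sub_eq_zero]
    intro _ h
    exact hfne (by rw [hf, h, sub_self])
  -- the map from Sym S r
  set F : Sym S r → Multiset k := fun s => s.val.map Subtype.val with hF
  have hFinj : Function.Injective F := by
    intro s t h
    exact Subtype.ext (Multiset.map_injective Subtype.val_injective h)
  have hrange : {b : Multiset k |
      Multiset.map (fun x => x ^ p - x) b = Multiset.replicate r (0 : k)} = Set.range F := by
    ext b
    simp only [Set.mem_setOf_eq, Set.mem_range]
    rw [Multiset.eq_replicate]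
    constructor
    · rintro ⟨hcardb, hall⟩
      have hmem : ∀ x ∈ b, x ∈ S := by
        intro x hx
        rw [hmemS]
        exact hall _ (Multiset.mem_map_of_mem _ hx)
      refine ⟨⟨b.pmap (fun x h => (⟨x, h⟩ : S)) hmem, ?_⟩, ?_⟩
      · rw [Multiset.card_pmap]
        simpa using hcardb
      · simp [hF, Multiset.map_pmap, Multiset.pmap_eq_map, Multiset.map_id]
    · rintro ⟨s, rfl⟩
      constructor
      · simp [hF, s.2]
      · intro y hy
        simp only [hF, Multiset.mem_map] at hy
        obtain ⟨y', hy', rfl⟩ := hy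
        obtain ⟨x, hx, rfl⟩ := hy'
        exact (hmemS x.1).mp x.2
  constructor
  · rw [hrange, ← Nat.card_coe_set_eq, Nat.card_range_of_injective hFinj,
      Nat.card_eq_fintype_card, Sym.card_sym_eq_choose, hcard]
  · intro hr2
    have := aux_choose_lt (p - 1) r (by omega) hr2
    have h1 : p - 1 + r = p + r - 1 := by omega
    have h2 : p - 1 + 1 = p := by omega
    rwa [h1, h2] at this
end
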